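/- arXiv:2403.02004 — 3 statements merged into one kernel-verified Lean document; each statement's English description precedes it below -/
import Mathlib

section
/- If a differentiable function f : ℝ^d → ℝ attains its infimum f_* on a nonempty closed set O_* and satisfies the Polyak–Łojasiewicz inequality 2λ(f(θ) − f_*) ≤ ‖∇f(θ)‖² with constant λ > 0, and additionally ∇f is L-Lipschitz, then f satisfies the quadratic growth condition 2(f(θ) − f_*) ≥ λ dist(θ, O_*)² for all θ ∈ ℝ^d. -/
open InnerProductSpace

lemma descent_lemma {E : Type*} [NormedAddCommGroup E] [InnerProductSpace ℝ E] [CompleteSpace E]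
    (f : E → ℝ) (L : ℝ) (hL : 0 ≤ L) (hf : Differentiable ℝ f)
    (hLip : ∀ x y, ‖gradient f x - gradient f y‖ ≤ L * ‖x - y‖) (x y : E) :
    f y ≤ f x + inner ℝ (gradient f x) (y - x) + L * ‖y - x‖ ^ 2 := by
  have hfd : ∀ z, fderiv ℝ f z = toDual ℝ E (gradient f z) := fun z =>
    ((hf z).hasGradientAt.hasFDerivAt).fderiv
  have key : ‖f y - f x - (toDual ℝ E (gradient f x)) (y - x)‖ ≤ (L * ‖y - x‖) * ‖y - x‖ := by
    apply Convex.norm_image_sub_le_of_norm_fderiv_le'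
      (fun z _ => (hf z)) ?_ (convex_segment x y) (left_mem_segment ℝ x y) (right_mem_segment ℝ x y)
    intro z hz
    rw [hfd z, ← map_sub, LinearIsometryEquiv.norm_map]
    refine (hLip z x).trans ?_
    have hzx : ‖z - x‖ ≤ ‖y - x‖ := by
      rw [segment_eq_image'] at hz
      obtain ⟨t, ht, rfl⟩ := hz
      simp only [add_sub_cancel_left, norm_smul, Real.norm_eq_abs, abs_of_nonneg ht.1]
      nlinarith [norm_nonneg (y - x), ht.2]
    nlinarith [norm_nonneg (y-x), norm_nonneg (z-x)]
  rw [Real.norm_eq_abs, abs_le] at key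
  have h2 : (toDual ℝ E (gradient f x)) (y - x) = inner ℝ (gradient f x) (y - x) :=
    toDual_apply_apply ..
  nlinarith [key.2]

set_option maxHeartbeats 2000000 in
lemma pl_dist_bound {E : Type*} [NormedAddCommGroup E] [InnerProductSpace ℝ E] [CompleteSpace E]
    (f : E → ℝ) (fstar lam L : ℝ) (hlam : 0 < lam) (hL : 0 < L)
    (hf : Differentiable ℝ f)
    (Ostar : Set E) (hO : Ostar = {θ | f θ = fstar})
    (hinf : ∀ θ, fstar ≤ f θ)
    (hLip : ∀ x y, ‖gradient f x - gradient f y‖ ≤ L * ‖x - y‖)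
    (hPL : ∀ θ, 2 * lam * (f θ - fstar) ≤ ‖gradient f θ‖ ^ 2)
    (θ₀ : E) (η : ℝ) (hη : 0 < η) (hη1 : L * η ≤ 1/2) (hη2 : 2 * lam * η ≤ 1/2) :
    Metric.infDist θ₀ Ostar ≤
      2 / ((1 - L * η) * Real.sqrt (2 * lam)) * Real.sqrt (f θ₀ - fstar) := by
  -- gradient vanishes on minimizers
  have hgz : ∀ x : E, f x = fstar → gradient f x = 0 := by
    intro x hx
    have hmin : ∀ y, f x ≤ f y := fun y => hx ▸ hinf y
    have h0 : fderiv ℝ f x = 0 := IsLocalMin.fderiv_eq_zero (Filter.Eventually.of_forall hmin)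
    rw [gradient, h0, map_zero]
  -- setup
  set sl : ℝ := Real.sqrt (2 * lam) with hsl_def
  have hsl : 0 < sl := Real.sqrt_pos.2 (by linarith)
  have hsl2 : sl ^ 2 = 2 * lam := Real.sq_sqrt (by linarith)
  set c : ℝ := η * (1 - L * η) with hc_def
  have hLη : (1:ℝ)/2 ≤ 1 - L * η := by linarith
  have hc : 0 < c := mul_pos hη (by linarith)
  set K : ℝ := 2 / ((1 - L * η) * sl) with hK_def
  have hK0 : 0 < K := div_pos (by norm_num) (mul_pos (by linarith) hsl)
  have hKcsl : K * (c * sl) = 2 * η := by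
    rw [hK_def, hc_def]; field_simp
  obtain ⟨θ, hθ0, hθs⟩ :
      ∃ θ : ℕ → E, θ 0 = θ₀ ∧ ∀ n, θ (n + 1) = θ n - η • gradient f (θ n) :=
    ⟨fun n => (fun x => x - η • gradient f x)^[n] θ₀, rfl,
      fun n => by simp only [Function.iterate_succ_apply']⟩
  obtain ⟨Δ, hΔeq⟩ : ∃ Δ : ℕ → ℝ, ∀ n, Δ n = f (θ n) - fstar :=
    ⟨fun n => f (θ n) - fstar, fun n => rfl⟩
  have hΔ0 : ∀ n, 0 ≤ Δ n := fun n => (hΔeq n) ▸ sub_nonneg.2 (hinf (θ n))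
  -- (A) descent
  have hA : ∀ n, Δ (n + 1) ≤ Δ n - c * ‖gradient f (θ n)‖ ^ 2 := by
    intro n
    have hd := descent_lemma f L hL.le hf hLip (θ n) (θ (n + 1))
    rw [hθs n] at hd
    have h1 : (θ n - η • gradient f (θ n)) - θ n = (-η) • gradient f (θ n) := by
      rw [neg_smul]; abel
    rw [h1, real_inner_smul_right, real_inner_self_eq_norm_sq, norm_smul, Real.norm_eq_abs,
      abs_neg, abs_of_pos hη] at hd
    rw [hΔeq (n+1), hΔeq n, hθs n, hc_def]
    nlinarith [norm_nonneg (gradient f (θ n)), sq_nonneg (‖gradient f (θ n)‖)]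
  -- (B)+(C) geometric decrease
  set r : ℝ := 1 - 2 * lam * c with hr_def
  have hcη : c ≤ η := by
    rw [hc_def]
    nlinarith [mul_nonneg (mul_nonneg hL.le hη.le) hη.le]
  have hr0 : 0 ≤ r := by
    rw [hr_def]
    nlinarith [mul_le_mul_of_nonneg_left hcη hlam.le]
  have hr1 : r < 1 := by
    rw [hr_def]; nlinarith [mul_pos hlam hc]
  have hB : ∀ n, Δ (n + 1) ≤ r * Δ n := by
    intro n
    have hA' := hA n
    have hpl : 2 * lam * Δ n ≤ ‖gradient f (θ n)‖ ^ 2 := by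
      rw [hΔeq n]; exact hPL (θ n)
    have h2 := mul_le_mul_of_nonneg_left hpl hc.le
    rw [hr_def]
    nlinarith [hΔ0 n]
  have hC : ∀ n, Δ n ≤ r ^ n * Δ 0 := by
    intro n
    induction n with
    | zero => simp
    | succ k ih =>
      calc Δ (k+1) ≤ r * Δ k := hB k
        _ ≤ r * (r ^ k * Δ 0) := by nlinarith
        _ = r ^ (k+1) * Δ 0 := by ring
  -- (D) step bound
  have hD : ∀ n, ‖θ (n+1) - θ n‖ ≤ K * (Real.sqrt (Δ n) - Real.sqrt (Δ (n+1))) := by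
    intro n
    by_cases hg : gradient f (θ n) = 0
    · have he : θ (n+1) = θ n := by rw [hθs n, hg, smul_zero, sub_zero]
      have hΔe : Δ (n+1) = Δ n := by rw [hΔeq (n+1), hΔeq n, he]
      rw [he, hΔe]; simp
    · set s : ℝ := ‖gradient f (θ n)‖ with hs_def
      have hs : 0 < s := norm_pos_iff.2 hg
      have hΔn : 0 < Δ n := by
        rcases (hΔ0 n).lt_or_eq with h | h
        · exact h
        · refine absurd (hgz (θ n) ?_) hg
          have h2 := hΔeq n
          linarith
      set a : ℝ := Real.sqrt (Δ n) with ha_def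
      set b : ℝ := Real.sqrt (Δ (n+1)) with hb_def
      have ha2 : a ^ 2 = Δ n := Real.sq_sqrt (hΔ0 n)
      have hb2 : b ^ 2 = Δ (n+1) := Real.sq_sqrt (hΔ0 (n+1))
      have ha0 : 0 < a := Real.sqrt_pos.2 hΔn
      have hb0 : 0 ≤ b := Real.sqrt_nonneg _
      have hba : b ≤ a := Real.sqrt_le_sqrt (by nlinarith [hA n, sq_nonneg s])
      have hsa : sl * a ≤ s := by
        have hpl : 2 * lam * Δ n ≤ s ^ 2 := by rw [hΔeq n]; exact hPL (θ n)
        have h2 : (sl * a) ^ 2 ≤ s ^ 2 := by rw [mul_pow, hsl2, ha2]; exact hpl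
        nlinarith [mul_pos hsl ha0]
      have hab : c * s ^ 2 ≤ (a - b) * (a + b) := by nlinarith [hA n]
      have h4 : sl * (a + b) ≤ 2 * s := by nlinarith [mul_le_mul_of_nonneg_left hba hsl.le]
      have hstep : c * sl * s ≤ 2 * (a - b) := by
        have h5 : (a - b) * (sl * (a + b)) ≤ (a - b) * (2 * s) :=
          mul_le_mul_of_nonneg_left h4 (by linarith)
        have h6 : sl * (c * s ^ 2) ≤ sl * ((a - b) * (a + b)) :=
          mul_le_mul_of_nonneg_left hab hsl.le
        have h7 : (c * sl * s) * s ≤ (2 * (a - b)) * s := by nlinarith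
        exact le_of_mul_le_mul_right h7 hs
      have hnorm : ‖θ (n+1) - θ n‖ = η * s := by
        rw [hθs n]
        have h8 : θ n - η • gradient f (θ n) - θ n = (-η) • gradient f (θ n) := by
          rw [neg_smul]; abel
        rw [h8, norm_smul, Real.norm_eq_abs, abs_neg, abs_of_pos hη]
      rw [hnorm]
      have h9 := mul_le_mul_of_nonneg_left hstep hK0.le
      nlinarith
  -- (E) telescoping
  have hE : ∀ n, ‖θ n - θ₀‖ ≤ K * (Real.sqrt (Δ 0) - Real.sqrt (Δ n)) := by
    intro n
    induction n with
    | zero => simp [hθ0]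
    | succ k ih =>
      have htri : ‖θ (k+1) - θ₀‖ ≤ ‖θ (k+1) - θ k‖ + ‖θ k - θ₀‖ :=
        norm_sub_le_norm_sub_add_norm_sub (θ (k+1)) (θ k) θ₀
      have := hD k
      nlinarith
  -- Cauchy
  have hsr0 : 0 ≤ Real.sqrt r := Real.sqrt_nonneg r
  have hsp : ∀ n : ℕ, Real.sqrt (r ^ n) = (Real.sqrt r) ^ n := by
    intro n
    induction n with
    | zero => simp
    | succ k ih => rw [pow_succ, pow_succ, Real.sqrt_mul (pow_nonneg hr0 k), ih]
  have hgeo : ∀ n, dist (θ n) (θ (n+1)) ≤ (K * Real.sqrt (Δ 0)) * (Real.sqrt r) ^ n := by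
    intro n
    rw [dist_eq_norm, norm_sub_rev]
    refine (hD n).trans ?_
    have h1 : Real.sqrt (Δ n) - Real.sqrt (Δ (n+1)) ≤ Real.sqrt (Δ n) := by
      linarith [Real.sqrt_nonneg (Δ (n+1))]
    have h2 : Real.sqrt (Δ n) ≤ Real.sqrt (r ^ n * Δ 0) := Real.sqrt_le_sqrt (hC n)
    have h3 : Real.sqrt (r ^ n * Δ 0) = (Real.sqrt r) ^ n * Real.sqrt (Δ 0) := by
      rw [Real.sqrt_mul (pow_nonneg hr0 n), hsp n]
    have h4 : Real.sqrt (Δ n) - Real.sqrt (Δ (n+1)) ≤ (Real.sqrt r) ^ n * Real.sqrt (Δ 0) := by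
      rw [← h3]; linarith
    calc K * (Real.sqrt (Δ n) - Real.sqrt (Δ (n+1)))
        ≤ K * ((Real.sqrt r) ^ n * Real.sqrt (Δ 0)) := mul_le_mul_of_nonneg_left h4 hK0.le
      _ = (K * Real.sqrt (Δ 0)) * (Real.sqrt r) ^ n := by ring
  have hsr1 : Real.sqrt r < 1 := by
    rw [show (1:ℝ) = Real.sqrt 1 by simp]
    exact Real.sqrt_lt_sqrt hr0 hr1
  have hcau : CauchySeq θ := cauchySeq_of_le_geometric _ _ hsr1 hgeo
  obtain ⟨θlim, hconv⟩ := cauchySeq_tendsto_of_complete hcau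
  -- Δ n → 0
  have hΔlim : Filter.Tendsto Δ Filter.atTop (nhds 0) := by
    have hgeolim : Filter.Tendsto (fun n : ℕ => r ^ n * Δ 0) Filter.atTop (nhds 0) := by
      have := tendsto_pow_atTop_nhds_zero_of_lt_one hr0 hr1
      simpa using this.mul_const (Δ 0)
    exact squeeze_zero hΔ0 hC hgeolim
  -- f θlim = fstar
  have hfθlim : f θlim = fstar := by
    have h1 : Filter.Tendsto (fun n => f (θ n)) Filter.atTop (nhds (f θlim)) :=
      (hf.continuous.continuousAt).tendsto.comp hconv
    have h2 : Filter.Tendsto (fun n => f (θ n)) Filter.atTop (nhds fstar) := by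
      have : (fun n => f (θ n)) = fun n => Δ n + fstar := by
        funext n; rw [hΔeq n]; ring
      rw [this]
      simpa using hΔlim.add_const fstar
    exact tendsto_nhds_unique h1 h2
  have hmem : θlim ∈ Ostar := by rw [hO]; exact hfθlim
  -- pass to limit in hE
  have hlim : ‖θlim - θ₀‖ ≤ K * Real.sqrt (Δ 0) := by
    have h1 : Filter.Tendsto (fun n => ‖θ n - θ₀‖) Filter.atTop (nhds ‖θlim - θ₀‖) :=
      ((hconv.sub_const θ₀).norm)
    refine le_of_tendsto h1 (Filter.Eventually.of_forall fun n => ?_)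
    have := hE n
    nlinarith [Real.sqrt_nonneg (Δ n), hK0]
  calc Metric.infDist θ₀ Ostar ≤ dist θ₀ θlim := Metric.infDist_le_dist_of_mem hmem
    _ = ‖θlim - θ₀‖ := by rw [dist_eq_norm, norm_sub_rev]
    _ ≤ K * Real.sqrt (Δ 0) := hlim
    _ = 2 / ((1 - L * η) * sl) * Real.sqrt (f θ₀ - fstar) := by
        rw [hK_def, hΔeq 0, hθ0]

open Real

/-- PŁI (with Lipschitz gradient) implies the quadratic growth condition. -/
theorem pl_implies_quadratic_growth
    (d : ℕ) (f : EuclideanSpace ℝ (Fin d) → ℝ) (fstar lam L : ℝ)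
    (hlam : 0 < lam) (hL : 0 < L)
    (hf : Differentiable ℝ f)
    (Ostar : Set (EuclideanSpace ℝ (Fin d)))
    (hO : Ostar = {θ | f θ = fstar}) (hOne : Ostar.Nonempty) (hOcl : IsClosed Ostar)
    (hinf : ∀ θ, fstar ≤ f θ)
    (hLip : ∀ x y, ‖gradient f x - gradient f y‖ ≤ L * ‖x - y‖)
    (hPL : ∀ θ, 2 * lam * (f θ - fstar) ≤ ‖gradient f θ‖ ^ 2) :
    ∀ θ, lam * (Metric.infDist θ Ostar) ^ 2 ≤ 2 * (f θ - fstar) := by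
  intro θ₀
  have hΔnn : 0 ≤ f θ₀ - fstar := sub_nonneg.2 (hinf θ₀)
  set D : ℝ := Metric.infDist θ₀ Ostar with hD_def
  have hD0 : 0 ≤ D := Metric.infDist_nonneg
  have hsl : 0 < Real.sqrt (2 * lam) := Real.sqrt_pos.2 (by linarith)
  have hsl2 : (Real.sqrt (2 * lam)) ^ 2 = 2 * lam := Real.sq_sqrt (by linarith)
  have key : ∀ η : ℝ, 0 < η → L * η ≤ 1/2 → 2 * lam * η ≤ 1/2 →
      lam * D ^ 2 * (1 - L * η) ^ 2 ≤ 2 * (f θ₀ - fstar) := by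
    intro η h1 h2 h3
    have hb := pl_dist_bound f fstar lam L hlam hL hf Ostar hO hinf hLip hPL θ₀ η h1 h2 h3
    have hA : (0:ℝ) < 1 - L * η := by linarith
    have hpos : 0 < (1 - L * η) * Real.sqrt (2 * lam) := mul_pos hA hsl
    have hmul : D * ((1 - L * η) * Real.sqrt (2 * lam)) ≤
        2 * Real.sqrt (f θ₀ - fstar) := by
      calc D * ((1 - L * η) * Real.sqrt (2 * lam))
          ≤ (2 / ((1 - L * η) * Real.sqrt (2 * lam)) * Real.sqrt (f θ₀ - fstar)) *
            ((1 - L * η) * Real.sqrt (2 * lam)) := mul_le_mul_of_nonneg_right hb hpos.le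
        _ = 2 * Real.sqrt (f θ₀ - fstar) := by field_simp
    have hs2 : (Real.sqrt (f θ₀ - fstar)) ^ 2 = f θ₀ - fstar := Real.sq_sqrt hΔnn
    have hsq := mul_self_le_mul_self (by positivity) hmul
    nlinarith [hsq, hs2, hsl2]
  -- take the limit η → 0
  set η₀ : ℝ := min (1 / (2 * L)) (1 / (4 * lam)) with hη₀_def
  have hη₀ : 0 < η₀ := lt_min (by positivity) (by positivity)
  have hLη₀ : L * η₀ ≤ 1 / 2 := by
    have : η₀ ≤ 1 / (2 * L) := min_le_left _ _
    rw [le_div_iff₀ (by positivity)] at this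
    nlinarith
  have hlamη₀ : 2 * lam * η₀ ≤ 1 / 2 := by
    have : η₀ ≤ 1 / (4 * lam) := min_le_right _ _
    rw [le_div_iff₀ (by positivity)] at this
    nlinarith
  have hu : Filter.Tendsto (fun n : ℕ => η₀ * (1 / (n + 1))) Filter.atTop (nhds 0) := by
    simpa using tendsto_one_div_add_atTop_nhds_zero_nat.const_mul η₀
  have hF : Filter.Tendsto (fun n : ℕ => lam * D ^ 2 * (1 - L * (η₀ * (1 / (n + 1)))) ^ 2)
      Filter.atTop (nhds (lam * D ^ 2 * (1 - L * 0) ^ 2)) :=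
    ((tendsto_const_nhds.sub (hu.const_mul L)).pow 2).const_mul _
  have hfin : lam * D ^ 2 * (1 - L * 0) ^ 2 ≤ 2 * (f θ₀ - fstar) := by
    refine le_of_tendsto hF (Filter.Eventually.of_forall fun n => ?_)
    have hn : (0:ℝ) < (n:ℝ) + 1 := by positivity
    have hη : 0 < η₀ * (1 / (n + 1)) := by positivity
    have hle : η₀ * (1 / (n + 1)) ≤ η₀ := by
      rw [mul_one_div]
      exact div_le_self hη₀.le (by simp)
    exact key _ hη (by nlinarith) (by nlinarith [mul_le_mul_of_nonneg_left hle (by linarith : (0:ℝ) ≤ 2 * lam)])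
  simpa using hfin
end

section
/- Let F : M → ℝ ∪ {+∞} be lower semicontinuous on a complete metric space (M, d), with F_* := inf F, and let M_* := argmin F be nonempty and closed. Suppose (z_t)_{t≥0} ⊆ M satisfies, for all t' ≥ t ≥ 0, d(z_t, z_{t'}) ≤ √(2(F(z_t) − F_*)/λ) − √(2(F(z_{t'}) − F_*)/λ), and F(z_t) → F_* as t → ∞. Then (z_t) converges to some z_∞ ∈ M_*, and d(z_0, M_*) ≤ √(2(F(z_0) − F_*)/λ). -/
open Real Filter

/-- If a curve satisfies the Cauchy-type estimate coming from the extended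
Talagrand argument and its energy converges to the infimum, then the curve
converges to a minimizer, and the distance to the optimal set is bounded. -/
theorem cauchy_curve_converges_to_minimizer
    {M : Type*} [MetricSpace M] [CompleteSpace M]
    (F : M → EReal) (Fstar lam : ℝ) (hlam : 0 < lam)
    (hlsc : LowerSemicontinuous F)
    (hFge : ∀ w, (Fstar : EReal) ≤ F w)
    (Mstar : Set M) (hMstar : Mstar = {w | F w = (Fstar : EReal)})
    (hne : Mstar.Nonempty) (hcl : IsClosed Mstar)
    (z : ℝ → M)
    (hz : ∀ t t' : ℝ, 0 ≤ t → t ≤ t' →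
      dist (z t) (z t') ≤ Real.sqrt (2 * ((F (z t)).toReal - Fstar) / lam)
        - Real.sqrt (2 * ((F (z t')).toReal - Fstar) / lam))
    (hconv : Tendsto (fun t => F (z t)) atTop (nhds (Fstar : EReal))) :
    (∃ zlim ∈ Mstar, Tendsto z atTop (nhds zlim)) ∧
      Metric.infDist (z 0) Mstar
        ≤ Real.sqrt (2 * ((F (z 0)).toReal - Fstar) / lam) := by
  set g : ℝ → ℝ := fun t => Real.sqrt (2 * ((F (z t)).toReal - Fstar) / lam) with hgdef
  have hg0 : ∀ t, 0 ≤ g t := fun t => Real.sqrt_nonneg _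
  -- g tends to 0
  have hgt : Tendsto g atTop (nhds 0) := by
    have h1 : Tendsto (fun t => (F (z t)).toReal) atTop (nhds Fstar) := by
      have h := (EReal.tendsto_toReal (a := (Fstar : EReal)) (by simp) (by simp)).comp hconv
      simpa [Function.comp_def] using h
    have h2 : Tendsto (fun t => 2 * ((F (z t)).toReal - Fstar) / lam) atTop (nhds 0) := by
      have := ((h1.sub (tendsto_const_nhds (x := Fstar))).const_mul 2).div_const lam
      simpa using this
    have h3 := (Real.continuous_sqrt.tendsto 0).comp h2
    simpa [hgdef, Function.comp_def] using h3
  -- monotonicity-type estimate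
  have hle : ∀ t t', 0 ≤ t → t ≤ t' → dist (z t) (z t') ≤ g t := by
    intro t t' ht htt'
    have h := hz t t' ht htt'
    have := hg0 t'
    simp only [hgdef] at *
    linarith
  -- Cauchy
  have hcauchy : CauchySeq z := by
    refine Metric.cauchySeq_iff'.2 fun ε hε => ?_
    obtain ⟨N, hN0, hNε⟩ :=
      ((eventually_ge_atTop (0 : ℝ)).and (hgt.eventually (gt_mem_nhds hε))).exists
    exact ⟨N, fun n hn => lt_of_le_of_lt (by
      rw [dist_comm]; exact hle N n hN0 hn) hNε⟩
  obtain ⟨zlim, hzlim⟩ := cauchySeq_tendsto_of_complete hcauchy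
  -- zlim is a minimizer
  have hmem : zlim ∈ Mstar := by
    rw [hMstar]
    by_contra h
    have hlt : (Fstar : EReal) < F zlim := lt_of_le_of_ne (hFge zlim) (Ne.symm h)
    obtain ⟨y, hy1, hy2⟩ := exists_between hlt
    have h1 : ∀ᶠ t in atTop, y < F (z t) := hzlim.eventually (hlsc zlim y hy2)
    have h2 : ∀ᶠ t in atTop, F (z t) < y := hconv.eventually (Iio_mem_nhds hy1)
    obtain ⟨t, ht1, ht2⟩ := (h1.and h2).exists
    exact absurd (ht1.trans ht2) (lt_irrefl _)
  refine ⟨⟨zlim, hmem, hzlim⟩, ?_⟩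
  have hdist : dist (z 0) zlim ≤ g 0 := by
    have htd : Tendsto (fun t => dist (z 0) (z t)) atTop (nhds (dist (z 0) zlim)) :=
      tendsto_const_nhds.dist hzlim
    refine le_of_tendsto htd ?_
    filter_upwards [eventually_ge_atTop (0 : ℝ)] with t ht
    exact hle 0 t le_rfl ht
  exact (Metric.infDist_le_dist_of_mem hmem).trans hdist
end

section
/- Let u : [0,∞) → ℝ be differentiable with u(t) ≥ u_* for all t, and suppose u'(t) = −I(t) where I(t) ≥ 0 satisfies the Łojasiewicz-type bound 2λ(u(t) − u_*) ≤ I(t) for all t > 0 with λ > 0. Then √(u(t) − u_*) is nonincreasing and I(t)/(2√(u(t) − u_*)) = −(d/dt)√(u(t) − u_*) wherever u(t) > u_*; moreover ∫_t^{t'} √(I(s)) ds ≤ √(2/λ)(√(u(t) − u_*) − √(u(t') − u_*)) for t' ≥ t. -/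
open Real

/-- Key computation in the Otto–Villani-type argument: de Bruijn's identity
`u' = −I` and the Łojasiewicz-type bound `2λ(u − u⋆) ≤ I` give monotonicity of
`√(u − u⋆)`, the derivative identity, and the integral bound. -/
theorem otto_villani_key_computation
    (u I : ℝ → ℝ) (ustar lam : ℝ) (hlam : 0 < lam)
    (hu : Differentiable ℝ u) (hge : ∀ t, 0 ≤ t → ustar ≤ u t)
    (hI0 : ∀ t, 0 ≤ t → 0 ≤ I t)
    (hderiv : ∀ t, 0 ≤ t → deriv u t = -I t)
    (hLoj : ∀ t, 0 < t → 2 * lam * (u t - ustar) ≤ I t) :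
    AntitoneOn (fun t => Real.sqrt (u t - ustar)) (Set.Ici 0) ∧
    (∀ t, 0 < t → ustar < u t →
      I t / (2 * Real.sqrt (u t - ustar))
        = -deriv (fun s => Real.sqrt (u s - ustar)) t) ∧
    ∀ t t', 0 ≤ t → t ≤ t' →
      (∫ s in t..t', Real.sqrt (I s)) ≤
        Real.sqrt (2 / lam) * (Real.sqrt (u t - ustar) - Real.sqrt (u t' - ustar)) := by
  have hcont : Continuous u := hu.continuous
  set c := Real.sqrt (2 / lam) with hc_def
  have hc0 : 0 ≤ c := Real.sqrt_nonneg _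
  have hc2 : c ^ 2 = 2 / lam := Real.sq_sqrt (by positivity)
  -- antitonicity of u
  have huant : AntitoneOn u (Set.Ici 0) := by
    apply antitoneOn_of_deriv_nonpos (convex_Ici 0) hcont.continuousOn
      (hu.differentiableOn)
    intro x hx
    rw [interior_Ici] at hx
    rw [hderiv x hx.le]
    simpa using hI0 x hx.le
  -- Part 1
  have hant : AntitoneOn (fun t => Real.sqrt (u t - ustar)) (Set.Ici 0) := by
    intro a ha b hb hab
    exact Real.sqrt_le_sqrt (by linarith [huant ha hb hab])
  -- derivative of √(u − u⋆)
  have hgd : ∀ s : ℝ, ustar < u s →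
      HasDerivAt (fun r => Real.sqrt (u r - ustar))
        (deriv u s / (2 * Real.sqrt (u s - ustar))) s := by
    intro s hs
    have h1 : HasDerivAt (fun r => u r - ustar) (deriv u s) s :=
      (hu s).hasDerivAt.sub_const _
    exact h1.sqrt (sub_ne_zero.2 (ne_of_gt hs))
  refine ⟨hant, ?_, ?_⟩
  · -- Part 2
    intro t ht hut
    rw [(hgd t hut).deriv, hderiv t ht.le]
    ring
  · -- Part 3
    intro t t' ht htt'
    have ht'0 : (0:ℝ) ≤ t' := ht.trans htt'
    by_cases hint : IntervalIntegrable (fun s => Real.sqrt (I s))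
        MeasureTheory.volume t t'
    · -- key lemma on subintervals where u > ustar in the interior
      have key : ∀ a b : ℝ, 0 ≤ a → a ≤ b → t ≤ a → b ≤ t' →
          (∀ s, s ∈ Set.Ioo a b → ustar < u s) →
          (∫ s in a..b, Real.sqrt (I s)) ≤
            c * (Real.sqrt (u a - ustar) - Real.sqrt (u b - ustar)) := by
        intro a b ha0 hab hta hbt' hpos
        have hsub : Set.uIcc a b ⊆ Set.uIcc t t' := by
          rw [Set.uIcc_of_le hab, Set.uIcc_of_le htt']
          exact Set.Icc_subset_Icc hta hbt'
        have hint' : IntervalIntegrable (fun s => Real.sqrt (I s))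
            MeasureTheory.volume a b := hint.mono_set hsub
        have hφint : MeasureTheory.IntegrableOn (fun s => Real.sqrt (I s))
            (Set.Icc a b) MeasureTheory.volume :=
          (intervalIntegrable_iff_integrableOn_Icc_of_le hab).1 hint'
        have hG : ContinuousOn (fun s => -(c * Real.sqrt (u s - ustar)))
            (Set.Icc a b) :=
          ((continuous_const.mul (hcont.sub continuous_const).sqrt).neg).continuousOn
        have hres := intervalIntegral.integral_le_sub_of_hasDeriv_right_of_le hab hG
          (g' := fun s => c * (I s / (2 * Real.sqrt (u s - ustar))))
          (φ := fun s => Real.sqrt (I s))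
          (fun x hx => ?_) hφint (fun x hx => ?_)
        · calc (∫ s in a..b, Real.sqrt (I s)) ≤
              -(c * Real.sqrt (u b - ustar)) - -(c * Real.sqrt (u a - ustar)) := hres
            _ = c * (Real.sqrt (u a - ustar) - Real.sqrt (u b - ustar)) := by ring
        · -- derivative of -(c·√(u−u⋆))
          have hx0 : (0:ℝ) < x := lt_of_le_of_lt ha0 hx.1
          have hd := (((hgd x (hpos x hx)).const_mul c).neg)
          have : -(c * (deriv u x / (2 * Real.sqrt (u x - ustar))))
              = c * (I x / (2 * Real.sqrt (u x - ustar))) := by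
            rw [hderiv x hx0.le]; ring
          rw [this] at hd
          exact hd.hasDerivWithinAt
        · -- pointwise bound √I ≤ c·I/(2√(u−u⋆))
          have hx0 : (0:ℝ) < x := lt_of_le_of_lt ha0 hx.1
          have hux : ustar < u x := hpos x hx
          set sg := Real.sqrt (u x - ustar) with hsg
          set sI := Real.sqrt (I x) with hsI
          have hsg0 : 0 < sg := Real.sqrt_pos.2 (by linarith)
          have hsI0 : 0 ≤ sI := Real.sqrt_nonneg _
          have hsg2 : sg ^ 2 = u x - ustar := Real.sq_sqrt (by linarith)
          have hsI2 : sI ^ 2 = I x := Real.sq_sqrt (hI0 x hx0.le)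
          have hLx : 2 * lam * sg ^ 2 ≤ sI ^ 2 := by
            rw [hsg2, hsI2]; exact hLoj x hx0
          -- c * sI ≥ 2 * sg
          have h2sg : (0:ℝ) ≤ 2 * sg := by linarith
          have hcsI : 0 ≤ c * sI := mul_nonneg hc0 hsI0
          have h1 : 2 * sg ≤ c * sI := by
            have hsq : (2 * sg) ^ 2 ≤ (c * sI) ^ 2 := by
              have he : (c * sI) ^ 2 = (2 / lam) * sI ^ 2 := by rw [mul_pow, hc2]
              have h3 := mul_le_mul_of_nonneg_left hLx
                (le_of_lt (by positivity : (0:ℝ) < 2/lam))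
              have h4 : (2/lam) * (2 * lam * sg ^ 2) = 4 * sg ^ 2 := by
                field_simp; ring
              rw [he]; nlinarith
            calc 2 * sg = Real.sqrt ((2 * sg) ^ 2) := (Real.sqrt_sq h2sg).symm
              _ ≤ Real.sqrt ((c * sI) ^ 2) := Real.sqrt_le_sqrt hsq
              _ = c * sI := Real.sqrt_sq hcsI
          show sI ≤ c * (I x / (2 * sg))
          rw [mul_div_assoc', le_div_iff₀ (by positivity : (0:ℝ) < 2 * sg)]
          calc sI * (2 * sg) = (2 * sg) * sI := by ring
            _ ≤ (c * sI) * sI := mul_le_mul_of_nonneg_right h1 hsI0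
            _ = c * sI ^ 2 := by ring
            _ = c * I x := by rw [hsI2]
      by_cases hpos : ustar < u t'
      · -- u > ustar on the whole interval
        have h := key t t' ht htt' le_rfl le_rfl (fun s hs => by
          have := huant (Set.mem_Ici.2 (ht.trans hs.1.le)) (Set.mem_Ici.2 ht'0) hs.2.le
          linarith)
        exact h
      · -- u hits ustar; let T be the first time
        have hut' : u t' = ustar := le_antisymm (not_lt.1 hpos) (hge t' ht'0)
        set S : Set ℝ := Set.Icc t t' ∩ u ⁻¹' {ustar} with hS
        have hSne : S.Nonempty := ⟨t', ⟨⟨htt', le_rfl⟩, hut'⟩⟩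
        have hSbdd : BddBelow S := ⟨t, fun s hs => hs.1.1⟩
        have hScl : IsClosed S :=
          isClosed_Icc.inter (isClosed_singleton.preimage hcont)
        set T := sInf S with hT
        have hTmem : T ∈ S := hScl.csInf_mem hSne hSbdd
        have htT : t ≤ T := hTmem.1.1
        have hTt' : T ≤ t' := hTmem.1.2
        have hT0 : 0 ≤ T := ht.trans htT
        have huT : u T = ustar := hTmem.2
        -- u > ustar strictly before T
        have hbefore : ∀ s, s ∈ Set.Ioo t T → ustar < u s := by
          intro s hs
          rcases lt_or_eq_of_le (hge s (ht.trans hs.1.le)) with h | h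
          · exact h
          · exfalso
            have : s ∈ S := ⟨⟨hs.1.le, hs.2.le.trans hTt'⟩, h.symm⟩
            exact absurd (csInf_le hSbdd this) (not_le.2 hs.2)
        -- I vanishes after T
        have hafter : ∀ s, T < s → I s = 0 := by
          intro s hs
          have hs0 : 0 ≤ s := hT0.trans hs.le
          have huconst : ∀ r, T ≤ r → u r = ustar := by
            intro r hr
            have h1 : u r ≤ u T := huant (Set.mem_Ici.2 hT0)
              (Set.mem_Ici.2 (hT0.trans hr)) hr
            have h2 : ustar ≤ u r := hge r (hT0.trans hr)
            rw [huT] at h1; linarith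
          have hev : u =ᶠ[nhds s] fun _ => ustar := by
            filter_upwards [isOpen_Ioi.mem_nhds hs] with r hr
            exact huconst r (le_of_lt hr)
          have : deriv u s = 0 := by
            rw [hev.deriv_eq]; simp
          have := hderiv s hs0
          rw [this] at *
          linarith [hderiv s hs0]
        -- split the integral at T
        have hintA : IntervalIntegrable (fun s => Real.sqrt (I s))
            MeasureTheory.volume t T := hint.mono_set (by
          rw [Set.uIcc_of_le htT, Set.uIcc_of_le htt']
          exact Set.Icc_subset_Icc le_rfl hTt')
        have hintB : IntervalIntegrable (fun s => Real.sqrt (I s))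
            MeasureTheory.volume T t' := hint.mono_set (by
          rw [Set.uIcc_of_le hTt', Set.uIcc_of_le htt']
          exact Set.Icc_subset_Icc htT le_rfl)
        have hsplit : (∫ s in t..t', Real.sqrt (I s))
            = (∫ s in t..T, Real.sqrt (I s)) + ∫ s in T..t', Real.sqrt (I s) :=
          (intervalIntegral.integral_add_adjacent_intervals hintA hintB).symm
        have hzero : (∫ s in T..t', Real.sqrt (I s)) = 0 := by
          rw [intervalIntegral.integral_of_le hTt']
          apply MeasureTheory.setIntegral_eq_zero_of_forall_eq_zero
          intro x hx
          rw [hafter x hx.1, Real.sqrt_zero]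
        have hkey := key t T ht htT le_rfl hTt' hbefore
        have hGT : Real.sqrt (u T - ustar) = 0 := by rw [huT]; simp
        have hGt' : Real.sqrt (u t' - ustar) = 0 := by rw [hut']; simp
        rw [hsplit, hzero, add_zero, hGt']
        rw [hGT] at hkey
        linarith
    · rw [intervalIntegral.integral_undef hint]
      have := hant (Set.mem_Ici.2 ht) (Set.mem_Ici.2 ht'0) htt'
      have : 0 ≤ Real.sqrt (u t - ustar) - Real.sqrt (u t' - ustar) := by linarith
      positivity
end
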